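/- Take r = 3. For all integers m ≥ 0 and n ≥ 3m+1 with n ≡ 1 (mod 3): x_{2,3m+1}·x_{1,n} = Σ_{s=0}^{3m+1} x_{1,n+3m+1−2s}; that is, X_{E_2[3m+1]}X_{E_1[n]} = X_{E_1[n+3m+1]} + X_{E_1[n+3m−1]} + X_{E_1[n+3m−3]} + ⋯ + X_{E_1[n−3m+1]} + X_{E_1[n−3m−1]}. -/

import Mathlib

section Aux

variable {R : Type*} [CommRing R] (x : ℤ → ℕ → R)

private lemma xshift (hper : ∀ (i : ℤ) (n : ℕ), x (i + 3) n = x i n) (k : ℤ) :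
    ∀ (i : ℤ) (n : ℕ), x (i + 3 * k) n = x i n := by
  induction k using Int.induction_on with
  | zero => intro i n; norm_num
  | succ k ih =>
      intro i n
      have e : i + 3 * ((k : ℤ) + 1) = (i + 3 * (k : ℤ)) + 3 := by ring
      rw [e, hper, ih]
  | pred k ih =>
      intro i n
      have e : (i + 3 * (-(k : ℤ) - 1)) + 3 = i + 3 * (-(k : ℤ)) := by ring
      have h2 := hper (i + 3 * (-(k : ℤ) - 1)) n
      rw [e] at h2
      rw [show i + 3 * (-(k : ℤ) - 1) = i + 3 * (-(k : ℤ) - 1) from rfl, ← h2, ih]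

private lemma xeq (hper : ∀ (i : ℤ) (n : ℕ), x (i + 3) n = x i n) (i j : ℤ)
    (h : (3 : ℤ) ∣ (i - j)) (n : ℕ) : x i n = x j n := by
  obtain ⟨k, hk⟩ := h
  have e : i = j + 3 * k := by linarith
  rw [e]
  exact xshift x hper k j n

/-- generic one-step relation with the `x _ 1` factor reduced mod 3 -/
private lemma hvv (hper : ∀ (i : ℤ) (n : ℕ), x (i + 3) n = x i n)
    (hrel1 : ∀ (i : ℤ) (k : ℕ), x i (k + 1) * x (i + (k + 1 : ℕ)) 1 = x i (k + 2) + x i k)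
    (i : ℤ) (c : ℕ) (j : ℤ) (h : (3 : ℤ) ∣ (i + (c : ℤ) + 1 - j)) :
    x j 1 * x i (c + 1) = x i (c + 2) + x i c := by
  have h0 := hrel1 i c
  have he : x (i + ((c + 1 : ℕ) : ℤ)) 1 = x j 1 :=
    xeq x hper (i + ((c + 1 : ℕ) : ℤ)) j (by push_cast; omega) 1
  rw [he] at h0
  linear_combination h0

private lemma sym3 (hper : ∀ (i : ℤ) (n : ℕ), x (i + 3) n = x i n) (j : ℤ) :
    (x j 1 * x (j + 1) 1 * x (j + 2) 1 = x 0 1 * x 1 1 * x 2 1) ∧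
      (x j 1 + x (j + 1) 1 + x (j + 2) 1 = x 0 1 + x 1 1 + x 2 1) := by
  induction j using Int.induction_on with
  | zero => norm_num
  | succ k ih =>
      obtain ⟨h1, h2⟩ := ih
      have e3 : x ((k : ℤ) + 1 + 2) 1 = x (k : ℤ) 1 := by
        rw [show (k : ℤ) + 1 + 2 = (k : ℤ) + 3 from by ring]; exact hper k 1
      have e2 : x ((k : ℤ) + 1 + 1) 1 = x ((k : ℤ) + 2) 1 := by norm_num; ring_nf
      constructor
      · rw [e3, show (k : ℤ) + 1 + 1 = (k : ℤ) + 2 from by ring]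
        linear_combination h1
      · rw [e3, show (k : ℤ) + 1 + 1 = (k : ℤ) + 2 from by ring]
        linear_combination h2
  | pred k ih =>
      obtain ⟨h1, h2⟩ := ih
      have e0 : x (-(k : ℤ) - 1) 1 = x (-(k : ℤ) + 2) 1 := by
        have := hper (-(k : ℤ) - 1) 1
        rw [show -(k : ℤ) - 1 + 3 = -(k : ℤ) + 2 from by ring] at this
        exact this.symm
      constructor
      · rw [e0, show -(k : ℤ) - 1 + 1 = -(k : ℤ) + 0 from by ring,
          show -(k : ℤ) - 1 + 2 = -(k : ℤ) + 1 from by ring]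
        rw [show -(k : ℤ) + 0 = -(k : ℤ) from by ring]
        rw [show -(k : ℤ) + 1 = -(k : ℤ) + 1 from rfl]
        linear_combination h1
      · rw [e0, show -(k : ℤ) - 1 + 1 = -(k : ℤ) + 0 from by ring,
          show -(k : ℤ) - 1 + 2 = -(k : ℤ) + 1 from by ring]
        rw [show -(k : ℤ) + 0 = -(k : ℤ) from by ring]
        linear_combination h2

/-- the transfer element: `T * x j (c+3) = x j (c+6) + x j c`. -/
private lemma L1 (hper : ∀ (i : ℤ) (n : ℕ), x (i + 3) n = x i n)
    (hrel1 : ∀ (i : ℤ) (k : ℕ), x i (k + 1) * x (i + (k + 1 : ℕ)) 1 = x i (k + 2) + x i k)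
    (j : ℤ) (c : ℕ) :
    (x 0 1 * x 1 1 * x 2 1 - x 0 1 - x 1 1 - x 2 1) * x j (c + 3) = x j (c + 6) + x j c := by
  have R0 := hvv x hper hrel1 j c (j + (c : ℤ) + 1) (by omega)
  have R1 := hvv x hper hrel1 j (c + 1) (j + (c : ℤ) + 2) (by push_cast; ring_nf; omega)
  have R2 := hvv x hper hrel1 j (c + 2) (j + (c : ℤ) + 3) (by push_cast; ring_nf; omega)
  have R3 := hvv x hper hrel1 j (c + 3) (j + (c : ℤ) + 1) (by push_cast; ring_nf; omega)
  have R4 := hvv x hper hrel1 j (c + 4) (j + (c : ℤ) + 2) (by push_cast; ring_nf; omega)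
  simp only [show c + 1 + 1 = c + 2 from by omega, show c + 1 + 2 = c + 3 from by omega,
    show c + 2 + 1 = c + 3 from by omega, show c + 2 + 2 = c + 4 from by omega,
    show c + 3 + 1 = c + 4 from by omega, show c + 3 + 2 = c + 5 from by omega,
    show c + 4 + 1 = c + 5 from by omega, show c + 4 + 2 = c + 6 from by omega]
    at R1 R2 R3 R4
  obtain ⟨P1, P2⟩ := sym3 x hper (j + (c : ℤ) + 1)
  simp only [show j + (c : ℤ) + 1 + 1 = j + (c : ℤ) + 2 from by ring,
    show j + (c : ℤ) + 1 + 2 = j + (c : ℤ) + 3 from by ring] at P1 P2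
  linear_combination R4 + x (j + (c : ℤ) + 2) 1 * R3 +
    (x (j + (c : ℤ) + 1) 1 * x (j + (c : ℤ) + 2) 1 - 1) * R2 +
    x (j + (c : ℤ) + 1) 1 * R1 + R0 - x j (c + 3) * P1 + x j (c + 3) * P2

private lemma key (hper : ∀ (i : ℤ) (n : ℕ), x (i + 3) n = x i n)
    (hzero : ∀ i : ℤ, x i 0 = 1)
    (hrel1 : ∀ (i : ℤ) (k : ℕ), x i (k + 1) * x (i + (k + 1 : ℕ)) 1 = x i (k + 2) + x i k) :
    ∀ (m b : ℕ), b % 3 = 0 →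
      x 2 (3 * m + 1) * x 1 (b + (3 * m + 1)) =
        ∑ s ∈ Finset.range (3 * m + 2), x 1 (b + 2 * s) := by
  intro m
  induction m using Nat.twoStepInduction with
  | zero =>
      intro b hb
      norm_num [Finset.sum_range_succ]
      have E := hvv x hper hrel1 1 b 2 (by omega)
      linear_combination E
  | one =>
      intro b hb
      norm_num [Finset.sum_range_succ,
        show 3 * 1 + 1 = 4 from by omega, show 3 * 1 + 2 = 5 from by omega]
      have E1 := hvv x hper hrel1 1 (b + 3) 2 (by push_cast; omega)
      have E2 := hvv x hper hrel1 1 (b + 4) 0 (by push_cast; omega)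
      have E3 := hvv x hper hrel1 1 (b + 6) 2 (by push_cast; omega)
      have E4 := hvv x hper hrel1 1 b 2 (by omega)
      have E5 := hvv x hper hrel1 1 (b + 2) 1 (by push_cast; omega)
      have E6 := hvv x hper hrel1 1 (b + 5) 1 (by push_cast; omega)
      have E7 := hvv x hper hrel1 1 (b + 1) 0 (by push_cast; omega)
      have U1 := hvv x hper hrel1 2 0 0 (by omega)
      have U2 := hvv x hper hrel1 2 1 1 (by omega)
      have U3 := hvv x hper hrel1 2 2 2 (by omega)
      simp only [show b + 3 + 1 = b + 4 from by omega, show b + 3 + 2 = b + 5 from by omega,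
        show b + 4 + 1 = b + 5 from by omega, show b + 4 + 2 = b + 6 from by omega,
        show b + 6 + 1 = b + 7 from by omega, show b + 6 + 2 = b + 8 from by omega,
        show b + 2 + 1 = b + 3 from by omega, show b + 2 + 2 = b + 4 from by omega,
        show b + 5 + 1 = b + 6 from by omega, show b + 5 + 2 = b + 7 from by omega,
        show b + 1 + 1 = b + 2 from by omega, show b + 1 + 2 = b + 3 from by omega]
        at E1 E2 E3 E5 E6 E7
      norm_num [hzero] at U1 U2 U3
      have hB0 : x 2 2 * x 1 (b + 4) = x 1 (b + 6) + x 0 1 * x 1 (b + 3) := by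
        linear_combination (-(x 1 (b + 4))) * U1 + x 0 1 * E1 + E2
      have hC0 : x 2 3 * x 1 (b + 4) = x 1 (b + 7) + x 0 1 * x 1 (b + 4) + x 1 (b + 1) := by
        linear_combination (-(x 1 (b + 4))) * U2 + x 1 1 * hB0 + E6 + x 0 1 * E5 + E7 - E1
      linear_combination (-(x 1 (b + 4))) * U3 + x 2 1 * hC0 + E3 + x 0 1 * E1 + E2 + E4 - hB0
  | more m ih ih1 =>
      intro b hb
      have h1 := ih1 (b + 3) (by omega)
      have h2 := ih (b + 6) (by omega)
      simp only [show 3 * (m + 1) + 1 = 3 * m + 4 from by omega,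
        show 3 * (m + 1) + 2 = 3 * m + 5 from by omega,
        show b + 3 + (3 * m + 4) = b + (3 * m + 7) from by omega] at h1
      simp only [show b + 6 + (3 * m + 1) = b + (3 * m + 7) from by omega] at h2
      have hT := L1 x hper hrel1 2 (3 * m + 1)
      simp only [show 3 * m + 1 + 3 = 3 * m + 4 from by omega,
        show 3 * m + 1 + 6 = 3 * m + 7 from by omega] at hT
      have h3 : (x 0 1 * x 1 1 * x 2 1 - x 0 1 - x 1 1 - x 2 1) *
          ∑ s ∈ Finset.range (3 * m + 5), x 1 (b + 3 + 2 * s) =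
          ∑ s ∈ Finset.range (3 * m + 5), (x 1 (b + 6 + 2 * s) + x 1 (b + 2 * s)) := by
        rw [Finset.mul_sum]
        refine Finset.sum_congr rfl fun s _ => ?_
        have := L1 x hper hrel1 1 (b + 2 * s)
        simp only [show b + 2 * s + 3 = b + 3 + 2 * s from by omega,
          show b + 2 * s + 6 = b + 6 + 2 * s from by omega] at this
        exact this
      have hs1 : ∑ s ∈ Finset.range (3 * m + 5), (x 1 (b + 6 + 2 * s) + x 1 (b + 2 * s)) =
          (∑ s ∈ Finset.range (3 * m + 5), x 1 (b + 6 + 2 * s)) +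
            ∑ s ∈ Finset.range (3 * m + 5), x 1 (b + 2 * s) := Finset.sum_add_distrib
      have hs2 : ∑ s ∈ Finset.range (3 * m + 5), x 1 (b + 6 + 2 * s) =
          (∑ s ∈ Finset.range (3 * m + 2), x 1 (b + 6 + 2 * s)) +
            x 1 (b + (6 * m + 10)) + x 1 (b + (6 * m + 12)) + x 1 (b + (6 * m + 14)) := by
        rw [show 3 * m + 5 = (3 * m + 4) + 1 from by omega, Finset.sum_range_succ,
          show 3 * m + 4 = (3 * m + 3) + 1 from by omega, Finset.sum_range_succ,
          show 3 * m + 3 = (3 * m + 2) + 1 from by omega, Finset.sum_range_succ]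
        rw [show b + 6 + 2 * (3 * m + 2) = b + (6 * m + 10) from by omega,
          show b + 6 + 2 * ((3 * m + 2) + 1) = b + (6 * m + 12) from by omega,
          show b + 6 + 2 * ((3 * m + 3) + 1) = b + (6 * m + 14) from by omega]
      have hs3 : ∑ s ∈ Finset.range (3 * m + 8), x 1 (b + 2 * s) =
          (∑ s ∈ Finset.range (3 * m + 5), x 1 (b + 2 * s)) +
            x 1 (b + (6 * m + 10)) + x 1 (b + (6 * m + 12)) + x 1 (b + (6 * m + 14)) := by
        rw [show 3 * m + 8 = (3 * m + 7) + 1 from by omega, Finset.sum_range_succ,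
          show 3 * m + 7 = (3 * m + 6) + 1 from by omega, Finset.sum_range_succ,
          show 3 * m + 6 = (3 * m + 5) + 1 from by omega, Finset.sum_range_succ]
        rw [show b + 2 * (3 * m + 5) = b + (6 * m + 10) from by omega,
          show b + 2 * ((3 * m + 5) + 1) = b + (6 * m + 12) from by omega,
          show b + 2 * ((3 * m + 6) + 1) = b + (6 * m + 14) from by omega]
      have egoal1 : 3 * (m + 2) + 1 = 3 * m + 7 := by omega
      have egoal2 : 3 * (m + 2) + 2 = 3 * m + 8 := by omega
      rw [egoal1, egoal2]
      linear_combination (-(x 1 (b + (3 * m + 7)))) * hT +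
        (x 0 1 * x 1 1 * x 2 1 - x 0 1 - x 1 1 - x 2 1) * h1 - h2 + h3 + hs1 + hs2 - hs3

end Aux

/-- rank-3 tube (Corollary 8.2(1)). For `m ≥ 0`, `n ≥ 3m+1`, `n ≡ 1 (mod 3)`:
`X_{E_2[3m+1]}X_{E_1[n]} = X_{E_1[n+3m+1]} + X_{E_1[n+3m-1]} + ⋯ + X_{E_1[n-3m-1]}`. -/
theorem rank_three_tube_formula_4 {R : Type*} [CommRing R]
    (x : ℤ → ℕ → R)
    (hper : ∀ (i : ℤ) (n : ℕ), x (i + 3) n = x i n)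
    (hzero : ∀ i : ℤ, x i 0 = 1)
    (hrel1 : ∀ (i : ℤ) (k : ℕ), x i (k + 1) * x (i + (k + 1 : ℕ)) 1 = x i (k + 2) + x i k)
    (hrel2 : ∀ (i : ℤ) (k : ℕ), x i 1 * x (i + 1) (k + 1) = x i (k + 2) + x (i + 2) k)
    (m n : ℕ) (hn : 3 * m + 1 ≤ n) (hmod : n % 3 = 1) :
    x 2 (3 * m + 1) * x 1 n =
      ∑ s ∈ Finset.range (3 * m + 2), x 1 (n + 3 * m + 1 - 2 * s) := by
  obtain ⟨b, rfl⟩ : ∃ b, n = b + (3 * m + 1) := ⟨n - (3 * m + 1), by omega⟩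
  have hb : b % 3 = 0 := by omega
  rw [key x hper hzero hrel1 m b hb]
  calc ∑ s ∈ Finset.range (3 * m + 2), x 1 (b + 2 * s)
      = ∑ s ∈ Finset.range (3 * m + 2), x 1 (b + 2 * (3 * m + 2 - 1 - s)) :=
        (Finset.sum_range_reflect (fun j => x 1 (b + 2 * j)) (3 * m + 2)).symm
    _ = ∑ s ∈ Finset.range (3 * m + 2), x 1 (b + (3 * m + 1) + 3 * m + 1 - 2 * s) := by
        refine Finset.sum_congr rfl fun s hs => ?_
        have := Finset.mem_range.mp hs
        congr 1
        omega
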